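/- Let A(n,4) be the maximum cardinality of a family of Hamilton paths of K_n such that the union of any two contains an alternating 4-cycle (a 4-cycle with two vertex-disjoint edges from each path), and let R(m) be the maximum size of a reversing family of permutations of [m]. Then A(n,4) ≥ 2^{⌊(n-2)/4⌋} · R(⌊n/2⌋). -/

import Mathlib

/-- The edge set of the Hamilton path of `K_n` visiting the vertices in the order
`τ 0, τ 1, …, τ (n-1)`. -/
def pathEdges (n : ℕ) (τ : Equiv.Perm (Fin n)) : Set (Sym2 (Fin n)) :=
  {e | ∃ i : ℕ, ∃ h : i + 1 < n, e = s(τ ⟨i, by omega⟩, τ ⟨i + 1, h⟩)}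

/-- The union of the Hamilton paths `τ` and `φ` contains an alternating 4-cycle:
a 4-cycle `a b c d` with the two (vertex-disjoint) edges `ab`, `cd` from `τ` and the two
(vertex-disjoint) edges `bc`, `da` from `φ`. -/
def AltFourCycle (n : ℕ) (τ φ : Equiv.Perm (Fin n)) : Prop :=
  ∃ a b c d : Fin n, a ≠ b ∧ a ≠ c ∧ a ≠ d ∧ b ≠ c ∧ b ≠ d ∧ c ≠ d ∧
    s(a, b) ∈ pathEdges n τ ∧ s(c, d) ∈ pathEdges n τ ∧
    s(b, c) ∈ pathEdges n φ ∧ s(d, a) ∈ pathEdges n φ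

/-- A family `F` of permutations of `[m]` is reversing if for any two distinct members
`ρ, σ` there are positions `i ≠ j` with `ρ i = σ j` and `ρ j = σ i`. -/
def Reversing (m : ℕ) (F : Finset (Equiv.Perm (Fin m))) : Prop :=
  ∀ ρ ∈ F, ∀ σ ∈ F, ρ ≠ σ → ∃ i j : Fin m, i ≠ j ∧ ρ i = σ j ∧ ρ j = σ i

/-- `R(m)`, the maximum cardinality of a reversing family of permutations of `[m]`. -/
noncomputable def R (m : ℕ) : ℕ :=
  sSup {k : ℕ | ∃ F : Finset (Equiv.Perm (Fin m)), Reversing m F ∧ F.card = k}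


namespace AltC4Aux

/-! ### The position-swapping function -/

/-- Swap positions `4s+2 ↔ 4s+3` whenever `ε s = true`. -/
def sw (ε : ℕ → Bool) (p : ℕ) : ℕ :=
  if p % 4 = 2 ∧ ε (p / 4) = true then p + 1
  else if p % 4 = 3 ∧ ε (p / 4) = true then p - 1
  else p

lemma sw_swap1 (ε : ℕ → Bool) (p s : ℕ) (hp : p = 4 * s + 2) (h : ε s = true) :
    sw ε p = p + 1 := by
  unfold sw
  rw [if_pos ⟨by omega, by rw [show p / 4 = s by omega]; exact h⟩]

lemma sw_swap2 (ε : ℕ → Bool) (p s : ℕ) (hp : p = 4 * s + 3) (h : ε s = true) :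
    sw ε p = p - 1 := by
  unfold sw
  rw [if_neg (fun hc => by omega), if_pos ⟨by omega, by rw [show p / 4 = s by omega]; exact h⟩]

lemma sw_id1 (ε : ℕ → Bool) (p : ℕ) (h : p % 4 = 0 ∨ p % 4 = 1) : sw ε p = p := by
  unfold sw
  rw [if_neg (fun hc => by omega), if_neg (fun hc => by omega)]

lemma sw_id2 (ε : ℕ → Bool) (p : ℕ) (h : ε (p / 4) = false) : sw ε p = p := by
  unfold sw
  rw [if_neg (fun hc => by rw [h] at hc; exact Bool.false_ne_true hc.2),
      if_neg (fun hc => by rw [h] at hc; exact Bool.false_ne_true hc.2)]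

lemma sw_invol (ε : ℕ → Bool) : Function.Involutive (sw ε) := by
  intro p
  by_cases h2 : p % 4 = 2 ∧ ε (p / 4) = true
  · have e1 : sw ε p = p + 1 := by unfold sw; rw [if_pos h2]
    rw [e1, sw_swap2 ε (p + 1) (p / 4) (by omega) h2.2]
    omega
  · by_cases h3 : p % 4 = 3 ∧ ε (p / 4) = true
    · have e1 : sw ε p = p - 1 := by unfold sw; rw [if_neg h2, if_pos h3]
      rw [e1, sw_swap1 ε (p - 1) (p / 4) (by omega) h3.2]
      omega
    · have e1 : sw ε p = p := by unfold sw; rw [if_neg h2, if_neg h3]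
      rw [e1, e1]

/-- The pair of positions `(2i, 2i+1)` is mapped to itself by `sw`, either identically
or swapped. -/
lemma sw_even_pair (ε : ℕ → Bool) (i : ℕ) :
    (sw ε (2 * i) = 2 * i ∧ sw ε (2 * i + 1) = 2 * i + 1) ∨
    (sw ε (2 * i) = 2 * i + 1 ∧ sw ε (2 * i + 1) = 2 * i) := by
  by_cases hb : ε ((2 * i) / 4) = true
  · by_cases h2 : 2 * i % 4 = 2
    · right
      constructor
      · rw [sw_swap1 ε (2 * i) ((2 * i) / 4) (by omega) hb]
      · rw [sw_swap2 ε (2 * i + 1) ((2 * i) / 4) (by omega) hb]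
        omega
    · left
      have h0 : 2 * i % 4 = 0 := by omega
      exact ⟨sw_id1 ε _ (by omega), sw_id1 ε _ (by omega)⟩
  · left
    have hb' : ε ((2 * i) / 4) = false := by
      cases h : ε ((2 * i) / 4) <;> simp [h] at hb ⊢
    exact ⟨sw_id2 ε _ hb', sw_id2 ε _ (by rw [show (2*i+1)/4 = (2*i)/4 by omega]; exact hb')⟩

/-! ### Fin-level construction -/

def swF (n : ℕ) (ε : ℕ → Bool) (p : Fin n) : Fin n :=
  if h : sw ε p.val < n then ⟨sw ε p.val, h⟩ else p

lemma swF_invol (n : ℕ) (ε : ℕ → Bool) : Function.Involutive (swF n ε) := by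
  intro p
  unfold swF
  by_cases h : sw ε p.val < n
  · rw [dif_pos h]
    have h2 : sw ε ((⟨sw ε p.val, h⟩ : Fin n)).val < n := by
      show sw ε (sw ε p.val) < n
      rw [sw_invol ε p.val]; exact p.isLt
    rw [dif_pos h2]
    exact Fin.ext (sw_invol ε p.val)
  · rw [dif_neg h, dif_neg h]

lemma swF_eq {n : ℕ} {ε : ℕ → Bool} (p q : Fin n) (h : sw ε p.val = q.val) :
    swF n ε p = q := by
  unfold swF
  rw [dif_pos (by rw [h]; exact q.isLt)]
  exact Fin.ext h

/-- The base path: even position `2k` holds vertex `2k`; odd position `2k+1`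
holds vertex `2·ρ(k)+1`. -/
def bF (n : ℕ) (ρ : Equiv.Perm (Fin (n / 2))) (p : Fin n) : Fin n :=
  if h : p.val % 2 = 1 then
    ⟨2 * (ρ ⟨p.val / 2, by have := p.isLt; omega⟩).val + 1,
      by have := (ρ ⟨p.val / 2, by have := p.isLt; omega⟩).isLt; omega⟩
  else p

lemma bF_even {n : ℕ} {ρ : Equiv.Perm (Fin (n / 2))} (p : Fin n) (h : p.val % 2 = 0) :
    bF n ρ p = p := by
  unfold bF; rw [dif_neg (by omega)]

lemma bF_odd_val {n : ℕ} {ρ : Equiv.Perm (Fin (n / 2))} (p : Fin n) (h : p.val % 2 = 1) :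
    (bF n ρ p).val = 2 * (ρ ⟨p.val / 2, by have := p.isLt; omega⟩).val + 1 := by
  unfold bF; rw [dif_pos h]

/-- A rewriting helper. -/
lemma perm_congr {m : ℕ} (ρ : Equiv.Perm (Fin m)) (a b : ℕ) (ha : a < m) (hb : b < m)
    (hab : a = b) : ρ ⟨a, ha⟩ = ρ ⟨b, hb⟩ := by subst hab; rfl

lemma bF_val_odd {n : ℕ} {ρ : Equiv.Perm (Fin (n / 2))} (p : Fin n) (h : p.val % 2 = 1)
    (j : ℕ) (hj : j < n / 2) (hpj : p.val = 2 * j + 1) :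
    (bF n ρ p).val = 2 * (ρ ⟨j, hj⟩).val + 1 := by
  rw [bF_odd_val p h, perm_congr ρ (p.val / 2) j (by have := p.isLt; omega) hj (by omega)]


lemma bF_inj (n : ℕ) (ρ : Equiv.Perm (Fin (n / 2))) : Function.Injective (bF n ρ) := by
  intro a b hab
  have hv : (bF n ρ a).val = (bF n ρ b).val := congrArg Fin.val hab
  by_cases ha : a.val % 2 = 1 <;> by_cases hb : b.val % 2 = 1
  · rw [bF_odd_val a ha, bF_odd_val b hb] at hv
    have h1 : (ρ ⟨a.val / 2, by have := a.isLt; omega⟩).val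
        = (ρ ⟨b.val / 2, by have := b.isLt; omega⟩).val := by omega
    have h2 := ρ.injective (Fin.ext h1)
    have h3 : a.val / 2 = b.val / 2 := congrArg Fin.val h2
    exact Fin.ext (by omega)
  · rw [bF_odd_val a ha, (by exact congrArg Fin.val (bF_even b (by omega)) :
      (bF n ρ b).val = b.val)] at hv
    omega
  · rw [bF_odd_val b hb, (by exact congrArg Fin.val (bF_even a (by omega)) :
      (bF n ρ a).val = a.val)] at hv
    omega
  · rw [bF_even a (by omega), bF_even b (by omega)] at hab
    exact hab

/-- The Hamilton path (as a permutation: position ↦ vertex). -/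
noncomputable def ham (n : ℕ) (ρ : Equiv.Perm (Fin (n / 2))) (ε : ℕ → Bool) : Equiv.Perm (Fin n) :=
  Equiv.ofBijective (fun p => bF n ρ (swF n ε p))
    (Finite.injective_iff_bijective.mp ((bF_inj n ρ).comp (swF_invol n ε).injective))

lemma ham_apply (n : ℕ) (ρ : Equiv.Perm (Fin (n / 2))) (ε : ℕ → Bool) (p : Fin n) :
    ham n ρ ε p = bF n ρ (swF n ε p) := rfl

lemma ham_even (n : ℕ) (ρ : Equiv.Perm (Fin (n / 2))) (ε : ℕ → Bool)
    {p q : ℕ} (hq : sw ε p = q) (hq2 : q % 2 = 0) (hqn : q < n) (hp : p < n) :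
    ham n ρ ε ⟨p, hp⟩ = ⟨q, hqn⟩ := by
  rw [ham_apply, swF_eq ⟨p, hp⟩ ⟨q, hqn⟩ hq]
  exact bF_even _ hq2

lemma ham_odd (n : ℕ) (ρ : Equiv.Perm (Fin (n / 2))) (ε : ℕ → Bool)
    {p j : ℕ} (hq : sw ε p = 2 * j + 1) (hj : j < n / 2)
    (hb : 2 * (ρ ⟨j, hj⟩).val + 1 < n) (hp : p < n) :
    ham n ρ ε ⟨p, hp⟩ = ⟨2 * (ρ ⟨j, hj⟩).val + 1, hb⟩ := by
  rw [ham_apply, swF_eq ⟨p, hp⟩ ⟨2 * j + 1, by omega⟩ hq]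
  exact Fin.ext (bF_val_odd _ ((by omega : (2 * j + 1) % 2 = 1)) j hj rfl)

/-! ### Key edges -/

/-- The edge `{2i, 2·ρ(i)+1}` is present in every path `ham n ρ ε`. -/
lemma key_edge (n : ℕ) (ρ : Equiv.Perm (Fin (n / 2))) (ε : ℕ → Bool)
    (i : ℕ) (hi : i < n / 2) :
    s((⟨2 * i, by omega⟩ : Fin n),
      (⟨2 * (ρ ⟨i, hi⟩).val + 1, by have := (ρ ⟨i, hi⟩).isLt; omega⟩ : Fin n))
      ∈ pathEdges n (ham n ρ ε) := by
  have h1 : 2 * i + 1 < n := by omega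
  have hx : 2 * (ρ ⟨i, hi⟩).val + 1 < n := by have := (ρ ⟨i, hi⟩).isLt; omega
  refine ⟨2 * i, h1, ?_⟩
  rcases sw_even_pair ε i with ⟨ha, hb⟩ | ⟨ha, hb⟩
  · rw [ham_even n ρ ε ha (by omega) (by omega) (by omega),
      ham_odd n ρ ε (j := i) (by omega) hi hx h1]
  · rw [ham_odd n ρ ε (j := i) (p := 2 * i) ha hi hx (by omega),
      ham_even n ρ ε (q := 2 * i) hb (by omega) (by omega) h1]
    exact Sym2.eq_swap

/-! ### Alternating four-cycles -/

lemma mem_pathEdges (n : ℕ) (τ : Equiv.Perm (Fin n)) (p : ℕ) (hp : p + 1 < n)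
    (a b : Fin n) (ha : τ ⟨p, by omega⟩ = a) (hb : τ ⟨p + 1, hp⟩ = b) :
    s(a, b) ∈ pathEdges n τ := ⟨p, hp, by rw [ha, hb]⟩

lemma mem_pathEdges' (n : ℕ) (τ : Equiv.Perm (Fin n)) (p : ℕ) (hp : p + 1 < n)
    (a b : Fin n) (ha : τ ⟨p, by omega⟩ = a) (hb : τ ⟨p + 1, hp⟩ = b) :
    s(b, a) ∈ pathEdges n τ := ⟨p, hp, by rw [ha, hb, Sym2.eq_swap]⟩

lemma altFourCycle_symm {n : ℕ} {τ φ : Equiv.Perm (Fin n)} (h : AltFourCycle n τ φ) :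
    AltFourCycle n φ τ := by
  obtain ⟨a, b, c, d, h1, h2, h3, h4, h5, h6, e1, e2, e3, e4⟩ := h
  exact ⟨b, c, d, a, h4, h5, h1.symm, h6, h2.symm, h3.symm, e3, e4, e2, e1⟩

/-- Two paths whose pair-permutations have a reversal contain an alternating 4-cycle. -/
lemma altFourCycle_of_reversal (n : ℕ) (ρ σ : Equiv.Perm (Fin (n / 2)))
    (ε ε' : ℕ → Bool) (i j : Fin (n / 2)) (hij : i ≠ j)
    (h1 : ρ i = σ j) (h2 : ρ j = σ i) :
    AltFourCycle n (ham n ρ ε) (ham n σ ε') := by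
  have hin := i.isLt
  have hjn := j.isLt
  have hrin := (ρ i).isLt
  have hrjn := (ρ j).isLt
  have hvi : (ρ i).val ≠ (ρ j).val := fun h => hij (ρ.injective (Fin.ext h))
  have hij' : i.val ≠ j.val := fun h => hij (Fin.ext h)
  refine ⟨⟨2 * (ρ i).val + 1, by omega⟩, ⟨2 * i.val, by omega⟩,
    ⟨2 * (ρ j).val + 1, by omega⟩, ⟨2 * j.val, by omega⟩,
    ?_, ?_, ?_, ?_, ?_, ?_, ?_, ?_, ?_, ?_⟩
  · simp only [ne_eq, Fin.mk.injEq]; omega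
  · simp only [ne_eq, Fin.mk.injEq]; omega
  · simp only [ne_eq, Fin.mk.injEq]; omega
  · simp only [ne_eq, Fin.mk.injEq]; omega
  · simp only [ne_eq, Fin.mk.injEq]; omega
  · simp only [ne_eq, Fin.mk.injEq]; omega
  · rw [Sym2.eq_swap]
    exact key_edge n ρ ε i.val i.isLt
  · rw [Sym2.eq_swap]
    exact key_edge n ρ ε j.val j.isLt
  · have := key_edge n σ ε' i.val i.isLt
    simp only [show (σ ⟨i.val, i.isLt⟩) = ρ j from h2.symm] at this
    exact this
  · have := key_edge n σ ε' j.val j.isLt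
    simp only [show (σ ⟨j.val, j.isLt⟩) = ρ i from h1.symm] at this
    exact this

/-- Two paths with the same pair-permutation but a differing sign bit contain an
alternating 4-cycle. -/
lemma altFourCycle_of_sign (n : ℕ) (ρ : Equiv.Perm (Fin (n / 2))) (ε ε' : ℕ → Bool)
    (s : ℕ) (hn : 4 * s + 6 ≤ n) (h0 : ε s = false) (h1 : ε' s = true) :
    AltFourCycle n (ham n ρ ε) (ham n ρ ε') := by
  have hj0 : 2 * s < n / 2 := by omega
  have hj1 : 2 * s + 1 < n / 2 := by omega
  have hx0 := (ρ ⟨2 * s, hj0⟩).isLt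
  have hx1 := (ρ ⟨2 * s + 1, hj1⟩).isLt
  have hne : (ρ ⟨2 * s, hj0⟩).val ≠ (ρ ⟨2 * s + 1, hj1⟩).val := by
    intro h
    have h2 := ρ.injective (Fin.ext h)
    simp only [Fin.mk.injEq] at h2
    omega
  -- τ values (bit false at s: positions 4s+1 .. 4s+4 fixed)
  have t1 : ham n ρ ε ⟨4 * s + 1, by omega⟩
      = ⟨2 * (ρ ⟨2 * s, hj0⟩).val + 1, by omega⟩ :=
    ham_odd n ρ ε (p := 4 * s + 1) (j := 2 * s) (by rw [sw_id1 ε _ (by omega)]; omega)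
      hj0 (by omega) (by omega)
  have t2 : ham n ρ ε ⟨4 * s + 2, by omega⟩ = ⟨4 * s + 2, by omega⟩ :=
    ham_even n ρ ε (sw_id2 ε _ (by rw [show (4*s+2)/4 = s by omega]; exact h0))
      (by omega) (by omega) (by omega)
  have t3 : ham n ρ ε ⟨4 * s + 3, by omega⟩
      = ⟨2 * (ρ ⟨2 * s + 1, hj1⟩).val + 1, by omega⟩ :=
    ham_odd n ρ ε (p := 4 * s + 3) (j := 2 * s + 1)
      (by rw [sw_id2 ε _ (by rw [show (4*s+3)/4 = s by omega]; exact h0)]; omega)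
      hj1 (by omega) (by omega)
  have t4 : ham n ρ ε ⟨4 * s + 4, by omega⟩ = ⟨4 * s + 4, by omega⟩ :=
    ham_even n ρ ε (sw_id1 ε _ (by omega)) (by omega) (by omega) (by omega)
  -- φ values (bit true at s: positions 4s+2 ↔ 4s+3 swapped)
  have f1 : ham n ρ ε' ⟨4 * s + 1, by omega⟩
      = ⟨2 * (ρ ⟨2 * s, hj0⟩).val + 1, by omega⟩ :=
    ham_odd n ρ ε' (p := 4 * s + 1) (j := 2 * s) (by rw [sw_id1 ε' _ (by omega)]; omega)
      hj0 (by omega) (by omega)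
  have f2 : ham n ρ ε' ⟨4 * s + 2, by omega⟩
      = ⟨2 * (ρ ⟨2 * s + 1, hj1⟩).val + 1, by omega⟩ :=
    ham_odd n ρ ε' (p := 4 * s + 2) (j := 2 * s + 1) (by rw [sw_swap1 ε' _ s rfl h1]; omega)
      hj1 (by omega) (by omega)
  have f3 : ham n ρ ε' ⟨4 * s + 3, by omega⟩ = ⟨4 * s + 2, by omega⟩ :=
    ham_even n ρ ε' (p := 4 * s + 3) (q := 4 * s + 2) (by rw [sw_swap2 ε' _ s rfl h1]; omega)
      (by omega) (by omega) (by omega)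
  have f4 : ham n ρ ε' ⟨4 * s + 4, by omega⟩ = ⟨4 * s + 4, by omega⟩ :=
    ham_even n ρ ε' (sw_id1 ε' _ (by omega)) (by omega) (by omega) (by omega)
  refine ⟨⟨4 * s + 2, by omega⟩, ⟨2 * (ρ ⟨2 * s, hj0⟩).val + 1, by omega⟩,
    ⟨2 * (ρ ⟨2 * s + 1, hj1⟩).val + 1, by omega⟩, ⟨4 * s + 4, by omega⟩,
    ?_, ?_, ?_, ?_, ?_, ?_, ?_, ?_, ?_, ?_⟩
  · simp only [ne_eq, Fin.mk.injEq]; omega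
  · simp only [ne_eq, Fin.mk.injEq]; omega
  · simp only [ne_eq, Fin.mk.injEq]; omega
  · simp only [ne_eq, Fin.mk.injEq]; omega
  · simp only [ne_eq, Fin.mk.injEq]; omega
  · simp only [ne_eq, Fin.mk.injEq]; omega
  · exact mem_pathEdges' n _ (4 * s + 1) (by omega) _ _ t1 t2
  · exact mem_pathEdges n _ (4 * s + 3) (by omega) _ _ t3 t4
  · exact mem_pathEdges n _ (4 * s + 1) (by omega) _ _ f1 f2
  · exact mem_pathEdges' n _ (4 * s + 3) (by omega) _ _ f3 f4

/-! ### Decoding: injectivity -/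

/-- The sum of the values at positions `2i, 2i+1` determines `ρ i`. -/
lemma ham_pair_sum (n : ℕ) (ρ : Equiv.Perm (Fin (n / 2))) (ε : ℕ → Bool)
    (i : Fin (n / 2)) :
    (ham n ρ ε ⟨2 * i.val, by have := i.isLt; omega⟩).val
      + (ham n ρ ε ⟨2 * i.val + 1, by have := i.isLt; omega⟩).val
      = 2 * i.val + (2 * (ρ i).val + 1) := by
  have hin := i.isLt
  have hx := (ρ i).isLt
  have hρ : ρ ⟨i.val, i.isLt⟩ = ρ i := by rw [Fin.eta]
  have hρv : (ρ ⟨i.val, i.isLt⟩).val = (ρ i).val := congrArg Fin.val hρ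
  rcases sw_even_pair ε i.val with ⟨ha, hb⟩ | ⟨ha, hb⟩
  · rw [ham_even n ρ ε (p := 2 * i.val) (q := 2 * i.val) ha (by omega) (by omega) (by omega),
      ham_odd n ρ ε (j := i.val) (p := 2 * i.val + 1) (by omega) i.isLt
        (by rw [hρ]; omega) (by omega)]
  · rw [ham_odd n ρ ε (j := i.val) (p := 2 * i.val) ha i.isLt (by rw [hρ]; omega) (by omega),
      ham_even n ρ ε (p := 2 * i.val + 1) (q := 2 * i.val) hb (by omega) (by omega) (by omega)]
    simp only [Fin.val_mk]
    omega

/-- The parity of the value at position `4s+2` determines the sign bit `s`. -/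
lemma ham_bit_false (n : ℕ) (ρ : Equiv.Perm (Fin (n / 2))) (ε : ℕ → Bool)
    (s : ℕ) (hn : 4 * s + 6 ≤ n) (h0 : ε s = false) :
    (ham n ρ ε ⟨4 * s + 2, by omega⟩).val % 2 = 0 := by
  rw [ham_even n ρ ε (sw_id2 ε _ (by rw [show (4*s+2)/4 = s by omega]; exact h0))
    (by omega) (by omega) (by omega)]
  simp only [Fin.val_mk]
  omega

lemma ham_bit_true (n : ℕ) (ρ : Equiv.Perm (Fin (n / 2))) (ε : ℕ → Bool)
    (s : ℕ) (hn : 4 * s + 6 ≤ n) (h1 : ε s = true) :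
    (ham n ρ ε ⟨4 * s + 2, by omega⟩).val % 2 = 1 := by
  have hj1 : 2 * s + 1 < n / 2 := by omega
  rw [ham_odd n ρ ε (p := 4 * s + 2) (j := 2 * s + 1) (by rw [sw_swap1 ε _ s rfl h1]; omega)
    hj1 (by have := (ρ ⟨2*s+1, hj1⟩).isLt; omega) (by omega)]
  simp only [Fin.val_mk]
  omega

lemma ham_inj (n : ℕ) (ρ ρ' : Equiv.Perm (Fin (n / 2))) (ε ε' : ℕ → Bool)
    (h : ham n ρ ε = ham n ρ' ε') :
    ρ = ρ' ∧ ∀ s : ℕ, 4 * s + 6 ≤ n → ε s = ε' s := by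
  constructor
  · apply Equiv.ext
    intro i
    have h1 := ham_pair_sum n ρ ε i
    have h2 := ham_pair_sum n ρ' ε' i
    rw [h] at h1
    rw [h1] at h2
    exact Fin.ext (by omega)
  · intro s hs
    cases hε : ε s <;> cases hε' : ε' s
    · rfl
    · have h1 := ham_bit_false n ρ ε s hs hε
      have h2 := ham_bit_true n ρ' ε' s hs hε'
      rw [h] at h1
      omega
    · have h1 := ham_bit_true n ρ ε s hs hε
      have h2 := ham_bit_false n ρ' ε' s hs hε'
      rw [h] at h1
      omega
    · rfl

/-- Extend a finitely-supported sign vector to `ℕ`. -/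
def extB (t : ℕ) (e : Fin t → Bool) (s : ℕ) : Bool := if h : s < t then e ⟨s, h⟩ else false

lemma extB_lt {t : ℕ} {e : Fin t → Bool} {s : ℕ} (h : s < t) : extB t e s = e ⟨s, h⟩ :=
  dif_pos h

end AltC4Aux


/-- `A(n,4) ≥ 2^⌊(n-2)/4⌋ · R(⌊n/2⌋)` : there is a family of at least
`2^⌊(n-2)/4⌋ · R(⌊n/2⌋)` Hamilton paths of `K_n` such that the union of any two of them
contains an alternating 4-cycle. -/
theorem alt_four_cycle_family_lower_bound (n : ℕ) :
    ∃ F : Finset (Equiv.Perm (Fin n)),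
      2 ^ ((n - 2) / 4) * R (n / 2) ≤ F.card ∧
      ∀ τ ∈ F, ∀ φ ∈ F, τ ≠ φ → AltFourCycle n τ φ := by
  classical
  -- a reversing family of maximal cardinality
  obtain ⟨F₀, hrev, hcard⟩ : ∃ F₀ : Finset (Equiv.Perm (Fin (n / 2))),
      Reversing (n / 2) F₀ ∧ F₀.card = R (n / 2) := by
    have hne : {k : ℕ | ∃ F : Finset (Equiv.Perm (Fin (n / 2))),
        Reversing (n / 2) F ∧ F.card = k}.Nonempty :=
      ⟨0, ∅, fun ρ h => absurd h (Finset.notMem_empty ρ), Finset.card_empty⟩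
    have hbdd : BddAbove {k : ℕ | ∃ F : Finset (Equiv.Perm (Fin (n / 2))),
        Reversing (n / 2) F ∧ F.card = k} := by
      refine ⟨Fintype.card (Equiv.Perm (Fin (n / 2))), ?_⟩
      rintro k ⟨F, -, rfl⟩
      exact (Finset.card_le_univ F).trans_eq Finset.card_univ
    obtain ⟨F₀, h1, h2⟩ := Nat.sSup_mem hne hbdd
    exact ⟨F₀, h1, h2⟩
  have hGinj : Function.Injective
      (fun pr : Equiv.Perm (Fin (n / 2)) × (Fin ((n - 2) / 4) → Bool) =>
        AltC4Aux.ham n pr.1 (AltC4Aux.extB ((n - 2) / 4) pr.2)) := by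
    rintro ⟨ρ, e⟩ ⟨ρ', e'⟩ h
    obtain ⟨h1, h2⟩ := AltC4Aux.ham_inj n ρ ρ' _ _ h
    have he : e = e' := by
      funext s
      have h3 := h2 s.val (by have := s.isLt; omega)
      rwa [AltC4Aux.extB_lt s.isLt, AltC4Aux.extB_lt s.isLt, Fin.eta] at h3
    rw [Prod.mk.injEq]
    exact ⟨h1, he⟩
  refine ⟨Finset.image
    (fun pr : Equiv.Perm (Fin (n / 2)) × (Fin ((n - 2) / 4) → Bool) =>
      AltC4Aux.ham n pr.1 (AltC4Aux.extB ((n - 2) / 4) pr.2))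
    (F₀ ×ˢ Finset.univ), ?_, ?_⟩
  · have h2t : Fintype.card (Fin ((n - 2) / 4) → Bool) = 2 ^ ((n - 2) / 4) := by simp
    rw [Finset.card_image_of_injective _ hGinj, Finset.card_product, hcard,
      Finset.card_univ, h2t, mul_comm]
  · intro τ hτ φ hφ hne
    simp only [Finset.mem_image] at hτ hφ
    obtain ⟨⟨ρ, e⟩, hmem, rfl⟩ := hτ
    obtain ⟨⟨ρ', e'⟩, hmem', rfl⟩ := hφ
    rw [Finset.mem_product] at hmem hmem'
    by_cases hρ : ρ = ρ'
    · subst hρ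
      have hee : e ≠ e' := fun h => hne (by rw [h])
      obtain ⟨s, hs⟩ := Function.ne_iff.mp hee
      have hsn : 4 * s.val + 6 ≤ n := by have := s.isLt; omega
      have hes : AltC4Aux.extB ((n - 2) / 4) e s.val = e s := by
        rw [AltC4Aux.extB_lt s.isLt, Fin.eta]
      have hes' : AltC4Aux.extB ((n - 2) / 4) e' s.val = e' s := by
        rw [AltC4Aux.extB_lt s.isLt, Fin.eta]
      cases hb : e s <;> cases hb' : e' s
      · exact absurd (hb.trans hb'.symm) hs
      · exact AltC4Aux.altFourCycle_of_sign n ρ _ _ s.val hsn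
          (by rw [hes, hb]) (by rw [hes', hb'])
      · exact AltC4Aux.altFourCycle_symm (AltC4Aux.altFourCycle_of_sign n ρ _ _ s.val hsn
          (by rw [hes', hb']) (by rw [hes, hb]))
      · exact absurd (hb.trans hb'.symm) hs
    · obtain ⟨i, j, hij, h1, h2⟩ := hrev ρ hmem.1 ρ' hmem'.1 hρ
      exact AltC4Aux.altFourCycle_of_reversal n ρ ρ' _ _ i j hij h1 h2
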